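/- arXiv:0704.2904 — 2 statements merged into one kernel-verified Lean document; each statement's English description precedes it below -/
import Mathlib

section
/- Let m, n ≥ 1 and let i_1,…,i_m, j_1,…,j_m ∈ {1,…,n}, with the cyclic conventions i_{m+1} = i_1 and j_{m+1} = j_1. Assume that i_r ≠ i_{r+1} and j_s ≠ j_{s+1} for all 1 ≤ r, s ≤ m. Consider the multiset consisting of the 2m unordered pairs {i_r, i_{r+1}} (1 ≤ r ≤ m) and {j_s, j_{s+1}} (1 ≤ s ≤ m). If (1) every unordered pair occurring in this multiset occurs in it at least twice, and (2) {i_r, i_{r+1}} = {j_s, j_{s+1}} for at least one pair of indices (r, s), then the number of distinct values among i_1,…,i_m, j_1,…,j_m is at most m. -/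
open MeasureTheory ProbabilityTheory Matrix Filter Finset

section aux
variable {α : Type*} [DecidableEq α]

/-- first index at which the value `w k` appears. -/
def tauW (w : ℕ → α) (k : ℕ) : ℕ := Nat.find (⟨k, rfl⟩ : ∃ j, w j = w k)

lemma tauW_le (w : ℕ → α) (k : ℕ) : tauW w k ≤ k :=
  Nat.find_min' (⟨k, rfl⟩ : ∃ j, w j = w k) rfl

lemma tauW_spec (w : ℕ → α) (k : ℕ) : w (tauW w k) = w k :=
  Nat.find_spec (⟨k, rfl⟩ : ∃ j, w j = w k)

lemma tauW_congr (w : ℕ → α) {a b : ℕ} (h : w a = w b) : tauW w a = tauW w b := by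
  apply le_antisymm
  · exact Nat.find_min' (⟨a, rfl⟩ : ∃ j, w j = w a) ((tauW_spec w b).trans h.symm)
  · exact Nat.find_min' (⟨b, rfl⟩ : ∃ j, w j = w b) ((tauW_spec w a).trans h)

/-- parity potential along the walk `w` counting crossings of the edge `e0`. -/
def psiW (w : ℕ → α) (e0 : Sym2 α) : ℕ → ZMod 2
  | 0 => 0
  | (k+1) =>
    if h : tauW w (k+1) = k+1 then
      psiW w e0 k + (if s(w k, w (k+1)) = e0 then 1 else 0)
    else psiW w e0 (tauW w (k+1))
  termination_by k => k
  decreasing_by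
  · omega
  · exact lt_of_le_of_ne (tauW_le w (k+1)) h

lemma psiW_zero (w : ℕ → α) (e0 : Sym2 α) : psiW w e0 0 = 0 := by rw [psiW]

lemma psiW_succ_new (w : ℕ → α) (e0 : Sym2 α) {k : ℕ} (h : tauW w (k+1) = k+1) :
    psiW w e0 (k+1) = psiW w e0 k + (if s(w k, w (k+1)) = e0 then 1 else 0) := by
  rw [psiW, dif_pos h]

lemma psiW_succ_old (w : ℕ → α) (e0 : Sym2 α) {k : ℕ} (h : tauW w (k+1) ≠ k+1) :
    psiW w e0 (k+1) = psiW w e0 (tauW w (k+1)) := by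
  rw [psiW, dif_neg h]

lemma psiW_tau (w : ℕ → α) (e0 : Sym2 α) (k : ℕ) : psiW w e0 k = psiW w e0 (tauW w k) := by
  cases k with
  | zero => have : tauW w 0 = 0 := Nat.le_zero.mp (tauW_le w 0); rw [this]
  | succ k =>
    by_cases h : tauW w (k+1) = k+1
    · rw [h]
    · exact psiW_succ_old w e0 h

lemma psiW_val_congr (w : ℕ → α) (e0 : Sym2 α) {a b : ℕ} (h : w a = w b) :
    psiW w e0 a = psiW w e0 b := by
  rw [psiW_tau w e0 a, psiW_tau w e0 b, tauW_congr w h]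

end aux

/-- Cyclic successor on `Fin m`. -/
def finCyc {m : ℕ} (r : Fin m) : Fin m := ⟨(r.val + 1) % m, Nat.mod_lt _ r.pos⟩

lemma finCyc_eq_add_one {m : ℕ} [NeZero m] (r : Fin m) : finCyc r = r + 1 := by
  ext
  simp only [finCyc, Fin.add_def, Fin.val_one']
  rw [Nat.add_mod_mod]

open Fin.NatCast Fin.CommRing

/-- If each cyclically consecutive pair `{i_r, i_{r+1}}`, `{j_s, j_{s+1}}` occurs at least
twice in the combined multiset of such pairs, and some `i`-pair coincides with some
`j`-pair, then the number of distinct values among `i_1,…,i_m, j_1,…,j_m` is at most `m`. -/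
theorem statement13 (m n : ℕ) (hm : 1 ≤ m) (hn : 1 ≤ n)
    (i j : Fin m → Fin n)
    (hi : ∀ r, i r ≠ i (finCyc r)) (hj : ∀ s, j s ≠ j (finCyc s))
    (Pm : Multiset (Sym2 (Fin n)))
    (hPm : Pm = Multiset.map (fun r => s(i r, i (finCyc r))) Finset.univ.val +
      Multiset.map (fun t => s(j t, j (finCyc t))) Finset.univ.val)
    (h1 : ∀ e ∈ Pm, 2 ≤ Pm.count e)
    (h2 : ∃ r t, s(i r, i (finCyc r)) = s(j t, j (finCyc t))) :
    (Finset.image i Finset.univ ∪ Finset.image j Finset.univ).card ≤ m := by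
  haveI : NeZero m := ⟨by omega⟩
  simp only [finCyc_eq_add_one] at hPm h2
  obtain ⟨r1, t1, he12⟩ := h2
  -- a common vertex of the two cycles
  obtain ⟨r0, t0, hv0⟩ : ∃ r t, i r = j t := by
    rcases Sym2.eq_iff.mp he12 with ⟨h, -⟩ | ⟨h, -⟩
    · exact ⟨r1, t1, h⟩
    · exact ⟨r1, t1 + 1, h⟩
  -- the spliced closed walk of length 2m
  set w : ℕ → Fin n := fun k => if k < m then i (r0 + (k : Fin m)) else j (t0 + (k : Fin m))
    with hwdef
  set E : ℕ → Sym2 (Fin n) := fun k => s(w k, w (k+1)) with hEdef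
  have hwi : ∀ k, k < m → w k = i (r0 + (k : Fin m)) := by
    intro k hk; simp only [hwdef]; rw [if_pos hk]
  have hwj : ∀ k, ¬ k < m → w k = j (t0 + (k : Fin m)) := by
    intro k hk; simp only [hwdef]; rw [if_neg hk]
  have hw0 : w 0 = i r0 := by
    rw [hwi 0 (by omega)]; norm_num
  have hwm : w m = w 0 := by
    rw [hwj m (by omega), hw0, Fin.natCast_self, add_zero, hv0]
  have hEi : ∀ k, k < m → E k = s(i (r0 + (k : Fin m)), i (r0 + (k : Fin m) + 1)) := by
    intro k hk
    have hwk1 : w (k+1) = i (r0 + (k : Fin m) + 1) := by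
      by_cases h : k + 1 < m
      · rw [hwi _ h]; congr 1; push_cast; ring
      · have hkm : k + 1 = m := by omega
        rw [hwj _ h]
        have harg : t0 + ((k+1 : ℕ) : Fin m) = t0 := by
          rw [hkm, Fin.natCast_self, add_zero]
        rw [harg, ← hv0]
        congr 1
        have h1 : r0 + ((k : ℕ) : Fin m) + 1 = r0 + ((k+1 : ℕ) : Fin m) := by push_cast; ring
        rw [h1, hkm, Fin.natCast_self, add_zero]
    simp only [hEdef]
    rw [hwi k hk, hwk1]
  have hEj : ∀ k, m ≤ k → E k = s(j (t0 + (k : Fin m)), j (t0 + (k : Fin m) + 1)) := by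
    intro k hk
    have hwk1 : w (k+1) = j (t0 + (k : Fin m) + 1) := by
      rw [hwj _ (by omega)]; congr 1; push_cast; ring
    simp only [hEdef]
    rw [hwj k (by omega), hwk1]
  -- the multiset of step edges equals Pm
  have huniv : Multiset.range m = (Finset.univ : Finset (Fin m)).val.map Fin.val := by
    have h := congrArg Finset.val (Fin.map_valEmbedding_univ (n := m))
    rw [Finset.map_val] at h
    have h2 : (Finset.Iio m : Finset ℕ) = Finset.range m := by rw [Nat.Iio_eq_range]
    rw [h2, Finset.range_val] at h
    rw [← h]
    rfl
  have hrot_i : Multiset.map (fun r : Fin m => s(i (r0 + r), i (r0 + r + 1))) Finset.univ.val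
      = Multiset.map (fun r : Fin m => s(i r, i (r + 1))) Finset.univ.val := by
    have h := congrArg Finset.val (Finset.map_univ_equiv (Equiv.addLeft r0))
    rw [Finset.map_val] at h
    calc Multiset.map (fun r : Fin m => s(i (r0 + r), i (r0 + r + 1))) Finset.univ.val
        = Multiset.map ((fun r : Fin m => s(i r, i (r + 1))) ∘ (Equiv.addLeft r0)) Finset.univ.val := by
          apply Multiset.map_congr rfl; intro r _; simp [Equiv.addLeft]
      _ = Multiset.map (fun r : Fin m => s(i r, i (r + 1)))
            (Finset.univ.val.map (Equiv.addLeft r0).toEmbedding) := by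
          rw [Multiset.map_map]; rfl
      _ = _ := by rw [h]
  have hrot_j : Multiset.map (fun t : Fin m => s(j (t0 + t), j (t0 + t + 1))) Finset.univ.val
      = Multiset.map (fun t : Fin m => s(j t, j (t + 1))) Finset.univ.val := by
    have h := congrArg Finset.val (Finset.map_univ_equiv (Equiv.addLeft t0))
    rw [Finset.map_val] at h
    calc Multiset.map (fun t : Fin m => s(j (t0 + t), j (t0 + t + 1))) Finset.univ.val
        = Multiset.map ((fun t : Fin m => s(j t, j (t + 1))) ∘ (Equiv.addLeft t0)) Finset.univ.val := by
          apply Multiset.map_congr rfl; intro t _; simp [Equiv.addLeft]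
      _ = Multiset.map (fun t : Fin m => s(j t, j (t + 1)))
            (Finset.univ.val.map (Equiv.addLeft t0).toEmbedding) := by
          rw [Multiset.map_map]; rfl
      _ = _ := by rw [h]
  have hpart1 : Multiset.map E (Multiset.range m)
      = Multiset.map (fun r : Fin m => s(i r, i (r + 1))) Finset.univ.val := by
    rw [huniv, Multiset.map_map, ← hrot_i]
    apply Multiset.map_congr rfl
    intro r _
    simp only [Function.comp_apply]
    rw [hEi r.val r.isLt, Fin.cast_val_eq_self]
  have hpart2 : Multiset.map E ((Multiset.range m).map (m + ·))
      = Multiset.map (fun t : Fin m => s(j t, j (t + 1))) Finset.univ.val := by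
    rw [Multiset.map_map, huniv, Multiset.map_map, ← hrot_j]
    apply Multiset.map_congr rfl
    intro t _
    simp only [Function.comp_apply]
    rw [hEj (m + t.val) (by omega)]
    have harg : t0 + ((m + t.val : ℕ) : Fin m) = t0 + t := by
      push_cast
      simp only [Fin.natCast_self, Fin.cast_val_eq_self]
      ring
    rw [harg]
  have hsteps : Multiset.map E (Multiset.range (2*m)) = Pm := by
    rw [hPm, show 2*m = m + m by ring, Multiset.range_add, Multiset.map_add,
      hpart1, hpart2]
  -- cardinality of Pm
  have hcardPm : Multiset.card Pm = 2*m := by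
    rw [← hsteps, Multiset.card_map, Multiset.card_range]
  -- number of distinct edges is at most m
  have hD : Pm.toFinset.card ≤ m := by
    have hsum : ∑ e ∈ Pm.toFinset, Pm.count e = 2*m := by
      rw [Multiset.toFinset_sum_count_eq, hcardPm]
    have hge : Pm.toFinset.card * 2 ≤ ∑ e ∈ Pm.toFinset, Pm.count e := by
      calc Pm.toFinset.card * 2 = ∑ _e ∈ Pm.toFinset, 2 := by rw [Finset.sum_const, smul_eq_mul]
        _ ≤ _ := Finset.sum_le_sum fun e he => h1 e (Multiset.mem_toFinset.mp he)
    omega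
  -- main counting, by contradiction
  by_contra hc
  push_neg at hc
  have hVw : Finset.image i Finset.univ ∪ Finset.image j Finset.univ
      = (Finset.range (2*m)).image w := by
    ext x
    simp only [Finset.mem_union, Finset.mem_image, Finset.mem_univ, true_and, Finset.mem_range]
    constructor
    · rintro (⟨r, rfl⟩ | ⟨t, rfl⟩)
      · refine ⟨(r - r0).val, by have := (r - r0).isLt; omega, ?_⟩
        rw [hwi _ (r - r0).isLt, Fin.cast_val_eq_self]
        congr 1
        ring
      · refine ⟨m + (t - t0).val, by have := (t - t0).isLt; omega, ?_⟩
        rw [hwj _ (by omega)]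
        congr 1
        push_cast
        simp only [Fin.natCast_self, Fin.cast_val_eq_self]
        ring
    · rintro ⟨k, hk, rfl⟩
      by_cases h : k < m
      · exact Or.inl ⟨_, (hwi k h).symm⟩
      · exact Or.inr ⟨_, (hwj k h).symm⟩
  -- incremental count of new vertices
  have F2 : ∀ K : ℕ, ((Finset.range (K+1)).image w).card
      ≤ 1 + ((Finset.range K).filter
          (fun k => w (k+1) ∉ (Finset.range (k+1)).image w)).card := by
    intro K
    induction K with
    | zero => simp
    | succ K ih =>
      have him : (Finset.range (K+2)).image w
          = insert (w (K+1)) ((Finset.range (K+1)).image w) := by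
        rw [Finset.range_add_one, Finset.image_insert]
      by_cases hnew : w (K+1) ∉ (Finset.range (K+1)).image w
      · have hfil : (Finset.range (K+1)).filter
            (fun k => w (k+1) ∉ (Finset.range (k+1)).image w)
            = insert K ((Finset.range K).filter
              (fun k => w (k+1) ∉ (Finset.range (k+1)).image w)) := by
          rw [Finset.range_add_one, Finset.filter_insert, if_pos hnew]
        have hK : K ∉ (Finset.range K).filter
            (fun k => w (k+1) ∉ (Finset.range (k+1)).image w) := by simp
        have h3 := Finset.card_insert_le (w (K+1)) ((Finset.range (K+1)).image w)
        have h4 : ((Finset.range (K+1)).filter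
            (fun k => w (k+1) ∉ (Finset.range (k+1)).image w)).card
            = ((Finset.range K).filter
              (fun k => w (k+1) ∉ (Finset.range (k+1)).image w)).card + 1 := by
          rw [hfil, Finset.card_insert_of_notMem hK]
        rw [him]
        omega
      · push_neg at hnew
        have hins : insert (w (K+1)) ((Finset.range (K+1)).image w)
            = (Finset.range (K+1)).image w := Finset.insert_eq_self.mpr hnew
        have hsub : ((Finset.range K).filter
            (fun k => w (k+1) ∉ (Finset.range (k+1)).image w)).card
            ≤ ((Finset.range (K+1)).filter
              (fun k => w (k+1) ∉ (Finset.range (k+1)).image w)).card :=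
          Finset.card_le_card (Finset.filter_subset_filter _
            (Finset.range_subset_range.mpr (by omega)))
        rw [him, hins]
        omega
  -- every step edge is in Pm
  have hmaps : ∀ k, k < 2*m → E k ∈ Pm.toFinset := by
    intro k hk
    rw [Multiset.mem_toFinset, ← hsteps]
    exact Multiset.mem_map_of_mem E (Multiset.mem_range.mpr hk)
  -- E is injective on new steps
  have hinjaux : ∀ a b : ℕ, a ∈ (Finset.range (2*m)).filter
        (fun k => w (k+1) ∉ (Finset.range (k+1)).image w) →
      b ∈ (Finset.range (2*m)).filter
        (fun k => w (k+1) ∉ (Finset.range (k+1)).image w) →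
      E a = E b → a < b → False := by
    intro a b _ hb hab hlt
    rw [Finset.mem_filter] at hb
    apply hb.2
    simp only [hEdef] at hab
    rcases Sym2.eq_iff.mp hab with ⟨h1', h2'⟩ | ⟨h1', h2'⟩
    · exact Finset.mem_image.mpr ⟨a+1, Finset.mem_range.mpr (by omega), h2'⟩
    · exact Finset.mem_image.mpr ⟨a, Finset.mem_range.mpr (by omega), h1'⟩
  have hinj : Set.InjOn E ((Finset.range (2*m)).filter
      (fun k => w (k+1) ∉ (Finset.range (k+1)).image w)) := by
    intro a ha b hb hab
    rcases lt_trichotomy a b with h | h | h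
    · exact absurd (hinjaux a b ha hb hab h) not_false
    · exact h
    · exact absurd (hinjaux b a hb ha hab.symm h) not_false
  have hNcard : ((Finset.range (2*m)).filter
      (fun k => w (k+1) ∉ (Finset.range (k+1)).image w)).card ≤ Pm.toFinset.card :=
    Finset.card_le_card_of_injOn E
      (fun k hk => hmaps k (Finset.mem_range.mp (Finset.mem_filter.mp hk).1)) hinj
  -- the chain of inequalities forces equality everywhere
  have hchain : m + 1 ≤ 1 + ((Finset.range (2*m)).filter
      (fun k => w (k+1) ∉ (Finset.range (k+1)).image w)).card := by
    have h2m : 2*m - 1 + 1 = 2*m := by omega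
    have := F2 (2*m - 1)
    rw [h2m] at this
    rw [hVw] at hc
    have hmono : ((Finset.range (2*m-1)).filter
        (fun k => w (k+1) ∉ (Finset.range (k+1)).image w)).card
        ≤ ((Finset.range (2*m)).filter
        (fun k => w (k+1) ∉ (Finset.range (k+1)).image w)).card :=
      Finset.card_le_card (Finset.filter_subset_filter _ (Finset.range_subset_range.mpr (by omega)))
    omega
  have hNeq : ((Finset.range (2*m)).filter
      (fun k => w (k+1) ∉ (Finset.range (k+1)).image w)).card = m := by omega
  have hDeq : Pm.toFinset.card = m := by omega
  -- every edge occurs exactly twice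
  have hcount2 : ∀ e ∈ Pm, Pm.count e = 2 := by
    have hsum : ∑ e ∈ Pm.toFinset, Pm.count e = 2*m := by
      rw [Multiset.toFinset_sum_count_eq, hcardPm]
    have hconst : ∑ _e ∈ Pm.toFinset, 2 = 2*m := by
      rw [Finset.sum_const, smul_eq_mul, hDeq]; ring
    have := (Finset.sum_eq_sum_iff_of_le
      (fun e he => h1 e (Multiset.mem_toFinset.mp he))).mp (hconst.trans hsum.symm)
    intro e he
    exact ((this e (Multiset.mem_toFinset.mpr he))).symm
  -- every distinct edge arises from a new step
  have himg : ((Finset.range (2*m)).filter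
      (fun k => w (k+1) ∉ (Finset.range (k+1)).image w)).image E = Pm.toFinset := by
    apply Finset.eq_of_subset_of_card_le
    · intro e he
      obtain ⟨k, hk, rfl⟩ := Finset.mem_image.mp he
      exact hmaps k (Finset.mem_range.mp (Finset.mem_filter.mp hk).1)
    · rw [Finset.card_image_of_injOn hinj, hNeq, hDeq]
  -- first occurrence of an edge is a new step
  have T : ∀ k0, k0 < 2*m → (∀ j', j' < k0 → E j' ≠ E k0) →
      w (k0+1) ∉ (Finset.range (k0+1)).image w := by
    intro k0 hk0 hfirst
    have hmem : E k0 ∈ ((Finset.range (2*m)).filter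
        (fun k => w (k+1) ∉ (Finset.range (k+1)).image w)).image E := by
      rw [himg]; exact hmaps k0 hk0
    obtain ⟨k', hk', hEk'⟩ := Finset.mem_image.mp hmem
    rcases lt_trichotomy k' k0 with h | h | h
    · exact absurd hEk' (hfirst k' h)
    · subst h; exact (Finset.mem_filter.mp hk').2
    · exfalso
      apply (Finset.mem_filter.mp hk').2
      simp only [hEdef] at hEk'
      rcases Sym2.eq_iff.mp hEk' with ⟨h1', h2'⟩ | ⟨h1', h2'⟩
      · exact Finset.mem_image.mpr ⟨k0+1, Finset.mem_range.mpr (by omega), h2'.symm⟩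
      · exact Finset.mem_image.mpr ⟨k0, Finset.mem_range.mpr (by omega), h2'.symm⟩
  -- newness in terms of tauW
  have hNewTau : ∀ k : ℕ, (w (k+1) ∉ (Finset.range (k+1)).image w) → tauW w (k+1) = k+1 := by
    intro k hnew
    by_contra hne
    have hlt : tauW w (k+1) < k+1 := lt_of_le_of_ne (tauW_le w (k+1)) hne
    exact hnew (Finset.mem_image.mpr ⟨tauW w (k+1), Finset.mem_range.mpr hlt,
      tauW_spec w (k+1)⟩)
  -- the marked edge
  have he0A' : s(i r1, i (r1 + 1))
      ∈ Multiset.map (fun r : Fin m => s(i r, i (r + 1))) Finset.univ.val :=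
    Multiset.mem_map_of_mem _ (Finset.mem_val.mpr (Finset.mem_univ r1))
  have he0B' : s(i r1, i (r1 + 1))
      ∈ Multiset.map (fun t : Fin m => s(j t, j (t + 1))) Finset.univ.val := by
    rw [he12]
    exact Multiset.mem_map_of_mem _ (Finset.mem_val.mpr (Finset.mem_univ t1))
  set e0 : Sym2 (Fin n) := s(i r1, i (r1 + 1)) with he0def
  -- key consistency lemma
  have C : ∀ k, k < 2*m →
      psiW w e0 (k+1) = psiW w e0 k + (if E k = e0 then (1:ZMod 2) else 0) := by
    intro k
    induction k using Nat.strong_induction_on with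
    | _ k IH =>
      intro hk
      by_cases hnew : tauW w (k+1) = k+1
      · rw [psiW_succ_new w e0 hnew]
      · have hex : ∃ j', E j' = E k := ⟨k, rfl⟩
        obtain ⟨k0, hk0spec, hk0le, hk0first⟩ :
            ∃ k0, E k0 = E k ∧ k0 ≤ k ∧ ∀ j', j' < k0 → E j' ≠ E k0 :=
          ⟨Nat.find hex, Nat.find_spec hex, Nat.find_min' hex rfl,
            fun j' hj' hcontr => Nat.find_min hex hj' (hcontr.trans (Nat.find_spec hex))⟩
        have hk0ne : k0 ≠ k := by
          intro heq
          rw [heq] at hk0first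
          exact hnew (hNewTau k (T k hk hk0first))
        have hk0lt : k0 < k := lt_of_le_of_ne hk0le hk0ne
        have IH0 := IH k0 hk0lt (by omega)
        have hdelta : (if E k0 = e0 then (1:ZMod 2) else 0)
            = (if E k = e0 then (1:ZMod 2) else 0) := by rw [hk0spec]
        have hchar : ∀ x y d : ZMod 2, x = y + d → y = x + d := by decide
        have hk0spec' : s(w k0, w (k0+1)) = s(w k, w (k+1)) := hk0spec
        rcases Sym2.eq_iff.mp hk0spec' with ⟨ha, hb⟩ | ⟨ha, hb⟩
        · calc psiW w e0 (k+1) = psiW w e0 (k0+1) := psiW_val_congr w e0 hb.symm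
            _ = psiW w e0 k0 + (if E k0 = e0 then (1:ZMod 2) else 0) := IH0
            _ = psiW w e0 k + (if E k = e0 then (1:ZMod 2) else 0) := by
                rw [psiW_val_congr w e0 ha, hdelta]
        · calc psiW w e0 (k+1) = psiW w e0 k0 := psiW_val_congr w e0 ha.symm
            _ = psiW w e0 (k0+1) + (if E k0 = e0 then (1:ZMod 2) else 0) :=
                hchar _ _ _ IH0
            _ = psiW w e0 k + (if E k = e0 then (1:ZMod 2) else 0) := by
                rw [psiW_val_congr w e0 hb, hdelta]
  -- telescoping
  have Tel : ∀ K, K ≤ 2*m →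
      psiW w e0 K = ∑ k ∈ Finset.range K, (if E k = e0 then (1:ZMod 2) else 0) := by
    intro K
    induction K with
    | zero => intro _; simpa using psiW_zero w e0
    | succ K ih =>
      intro h
      rw [Finset.sum_range_succ, ← ih (by omega), C K (by omega)]
  -- the count of e0 among the i-steps is exactly one
  have he0A : e0 ∈ Multiset.map (fun r : Fin m => s(i r, i (r + 1))) Finset.univ.val := he0A'
  have he0B : e0 ∈ Multiset.map (fun t : Fin m => s(j t, j (t + 1))) Finset.univ.val := he0B'
  have he0Pm : e0 ∈ Pm := by
    rw [hPm]; exact Multiset.mem_add.mpr (Or.inl he0A)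
  have hcadd : Multiset.count e0 (Multiset.map (fun r : Fin m => s(i r, i (r + 1))) Finset.univ.val)
      + Multiset.count e0 (Multiset.map (fun t : Fin m => s(j t, j (t + 1))) Finset.univ.val)
      = 2 := by
    rw [← Multiset.count_add, ← hPm, hcount2 e0 he0Pm]
  have hA1 : Multiset.count e0
      (Multiset.map (fun r : Fin m => s(i r, i (r + 1))) Finset.univ.val) = 1 := by
    have h1A := Multiset.one_le_count_iff_mem.mpr he0A
    have h1B := Multiset.one_le_count_iff_mem.mpr he0B
    omega
  have hc1 : ((Finset.range m).filter (fun k => E k = e0)).card = 1 := by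
    have hcnt : Multiset.count e0 (Multiset.map E (Multiset.range m)) = 1 := by
      rw [hpart1]; exact hA1
    rw [Multiset.count_map] at hcnt
    rw [Finset.card_def, Finset.filter_val, Finset.range_val]
    rw [show (Multiset.filter (fun k => E k = e0) (Multiset.range m))
        = (Multiset.filter (fun a => e0 = E a) (Multiset.range m)) from
      Multiset.filter_congr (fun x _ => eq_comm)]
    exact hcnt
  have hsum1 : ∑ k ∈ Finset.range m, (if E k = e0 then (1:ZMod 2) else 0) = 1 := by
    rw [Finset.sum_boole, hc1]
    norm_num
  have hfin : psiW w e0 m = 1 := by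
    rw [Tel m (by omega), hsum1]
  have hfin0 : psiW w e0 m = 0 := by
    rw [psiW_val_congr w e0 hwm, psiW_zero]
  rw [hfin0] at hfin
  exact absurd hfin (by decide)
end

section
/- Let {A_n} be a sequence of Wigner(n,1) matrices with E|X_{12}|⁴ < ∞ and E[X_{11}²] < ∞, let c > 0 be such that σ(c) > 0, and let Ã_n be the truncation of A_n at level c. Then almost surely limsup_{n→∞} ‖A_n − Ã_n‖₂ ≤ √(Var(X_{12}·𝟙_{|X_{12}|>c})) + |1 − σ(c)| ≤ √(1 − σ²(c)) + |1 − σ(c)|. -/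
open MeasureTheory ProbabilityTheory Matrix Filter Finset

/-- A family (indexed by `L`) of mutually independent infinite entry arrays of
`Wigner(n,1)` matrices: the array is Hermitian (`X_{ji} = conj X_{ij}`), the upper-triangular
entries (diagonal included) form a mutually independent family across the whole family of
arrays, the strictly-upper entries of each array are identically distributed with mean `0`
and variance `1`, and the diagonal entries of each array are identically distributed and
real-valued. -/
structure IsWignerEntries {Ω : Type*} [MeasurableSpace Ω] (P : MeasureTheory.Measure Ω)
    {L : Type*} (X : L → ℕ → ℕ → Ω → ℂ) : Prop where
  meas : ∀ l i j, Measurable (X l i j)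
  herm : ∀ l i j ω, X l j i ω = starRingEnd ℂ (X l i j ω)
  indep : ProbabilityTheory.iIndepFun
    (fun q : L × {q : ℕ × ℕ // q.1 ≤ q.2} => X q.1 q.2.1.1 q.2.1.2) P
  offdiag_distrib : ∀ l i j, i < j → P.map (X l i j) = P.map (X l 0 1)
  diag_distrib : ∀ l i, P.map (X l i i) = P.map (X l 0 0)
  diag_real : ∀ l i ω, (X l i i ω).im = 0
  mean_zero : ∀ l, ∫ ω, X l 0 1 ω ∂P = 0
  var_one : ∀ l, ∫ ω, ‖X l 0 1 ω‖ ^ 2 ∂P = 1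

/-- The `n × n` Wigner matrix built from the entry array: `A_n = (1/√n)(X_{ij})_{i,j<n}`. -/
noncomputable def wignerMat {Ω : Type*} {L : Type*} (X : L → ℕ → ℕ → Ω → ℂ) (l : L)
    (n : ℕ) (ω : Ω) : Matrix (Fin n) (Fin n) ℂ :=
  Matrix.of fun i j => (Real.sqrt n : ℂ)⁻¹ * X l i.val j.val ω
/-- The "variance" `E‖Y − EY‖²` of a complex random variable. -/
noncomputable def cVar {Ω : Type*} [MeasurableSpace Ω] (P : MeasureTheory.Measure Ω)
    (Y : Ω → ℂ) : ℝ :=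
  ∫ ω, ‖Y ω - ∫ ω', Y ω' ∂P‖ ^ 2 ∂P

/-- `z·𝟙_{‖z‖ ≤ c}`. -/
noncomputable def truncBelow (c : ℝ) (z : ℂ) : ℂ := if ‖z‖ ≤ c then z else 0

/-- `z·𝟙_{‖z‖ > c}`. -/
noncomputable def truncAbove (c : ℝ) (z : ℂ) : ℂ := if ‖z‖ ≤ c then 0 else z

/-- `σ²(c) = Var(X₁₂·𝟙_{|X₁₂| ≤ c})` for the entry array `X`. -/
noncomputable def sigma2 {Ω : Type*} [MeasurableSpace Ω] (P : MeasureTheory.Measure Ω)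
    (Y : Ω → ℂ) (c : ℝ) : ℝ :=
  cVar P (fun ω => truncBelow c (Y ω))

/-- The truncation at level `c` of the Wigner matrix with entry array `X`: zero diagonal and
off-diagonal entries `(X_{ij}·𝟙_{|X_{ij}|≤c} − E[X_{ij}·𝟙_{|X_{ij}|≤c}])/σ(c)`, scaled
by `1/√n`. -/
noncomputable def truncMat {Ω : Type*} [MeasurableSpace Ω] (P : MeasureTheory.Measure Ω)
    (X : ℕ → ℕ → Ω → ℂ) (c : ℝ) (n : ℕ) (ω : Ω) : Matrix (Fin n) (Fin n) ℂ :=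
  Matrix.of fun i j =>
    if i = j then 0
    else (Real.sqrt n : ℂ)⁻¹ * (Real.sqrt (sigma2 P (X 0 1) c) : ℂ)⁻¹ *
      (truncBelow c (X i.val j.val ω) - ∫ ω', truncBelow c (X i.val j.val ω') ∂P)
/-- The normalized Schatten 2-norm `‖M‖₂ = (tr_n(MᴴM))^{1/2} = ((1/n)∑_{i,j}‖M_{ij}‖²)^{1/2}`. -/
noncomputable def schatten2 {n : ℕ} (M : Matrix (Fin n) (Fin n) ℂ) : ℝ :=
  Real.sqrt ((n : ℝ)⁻¹ * ∑ i : Fin n, ∑ j : Fin n, ‖M i j‖ ^ 2)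

lemma trunc_add (c : ℝ) (z : ℂ) : truncBelow c z + truncAbove c z = z := by
  unfold truncBelow truncAbove; split <;> simp

lemma truncBelow_conj (c : ℝ) (z : ℂ) :
    truncBelow c (starRingEnd ℂ z) = starRingEnd ℂ (truncBelow c z) := by
  unfold truncBelow
  rw [RCLike.norm_conj]
  split <;> simp

lemma truncAbove_conj (c : ℝ) (z : ℂ) :
    truncAbove c (starRingEnd ℂ z) = starRingEnd ℂ (truncAbove c z) := by
  unfold truncAbove
  rw [RCLike.norm_conj]
  split <;> simp

lemma measurable_truncBelow (c : ℝ) : Measurable (truncBelow c) :=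
  Measurable.ite (measurableSet_le measurable_norm measurable_const) measurable_id
    measurable_const

lemma measurable_truncAbove (c : ℝ) : Measurable (truncAbove c) :=
  Measurable.ite (measurableSet_le measurable_norm measurable_const) measurable_const
    measurable_id

lemma norm_truncBelow_le (c : ℝ) (hc : 0 ≤ c) (z : ℂ) : ‖truncBelow c z‖ ≤ c := by
  unfold truncBelow; split <;> simp_all

lemma norm_truncAbove_le (c : ℝ) (z : ℂ) : ‖truncAbove c z‖ ≤ ‖z‖ := by
  unfold truncAbove; split <;> simp

lemma normsq_trunc_split (c : ℝ) (z : ℂ) :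
    ‖truncBelow c z‖ ^ 2 + ‖truncAbove c z‖ ^ 2 = ‖z‖ ^ 2 := by
  unfold truncBelow truncAbove; split <;> simp

lemma sqrt_sum_sq_add_le {ι : Type*} [Fintype ι] (f g : ι → ℂ) :
    Real.sqrt (∑ i, ‖f i + g i‖ ^ 2) ≤
      Real.sqrt (∑ i, ‖f i‖ ^ 2) + Real.sqrt (∑ i, ‖g i‖ ^ 2) := by
  have h := norm_add_le (E := EuclideanSpace ℂ ι) ((WithLp.equiv 2 _).symm f)
    ((WithLp.equiv 2 _).symm g)
  simpa [EuclideanSpace.norm_eq] using h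

lemma sum_split (n : ℕ) (F : ℕ → ℕ → ℝ) :
    ∑ i ∈ range n, ∑ j ∈ range n, F i j
      = (∑ i ∈ range n, F i i) + ∑ j ∈ range n, ∑ i ∈ range j, (F i j + F j i) := by
  induction n with
  | zero => simp
  | succ n ih =>
    have hinner : ∀ i, ∑ j ∈ range (n+1), F i j = (∑ j ∈ range n, F i j) + F i n :=
      fun i => Finset.sum_range_succ _ _
    rw [Finset.sum_range_succ (fun i => ∑ j ∈ range (n+1), F i j)]
    simp only [hinner]
    rw [Finset.sum_add_distrib, ih,
      Finset.sum_range_succ (fun j => ∑ i ∈ range j, (F i j + F j i)),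
      Finset.sum_range_succ (fun i => F i i), Finset.sum_add_distrib]
    ring

lemma fin_sum_split (n : ℕ) (F : ℕ → ℕ → ℝ) :
    ∑ i : Fin n, ∑ j : Fin n, F i.val j.val
      = (∑ i ∈ range n, F i i) + ∑ j ∈ range n, ∑ i ∈ range j, (F i j + F j i) := by
  rw [← sum_split]
  rw [Fin.sum_univ_eq_sum_range (fun a => ∑ j : Fin n, F a j.val)]
  exact Finset.sum_congr rfl fun a _ => Fin.sum_univ_eq_sum_range (fun b => F a b) n


lemma schatten2_nonneg {n : ℕ} (M : Matrix (Fin n) (Fin n) ℂ) : 0 ≤ schatten2 M :=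
  Real.sqrt_nonneg _

lemma schatten2_add_le {n : ℕ} (M N : Matrix (Fin n) (Fin n) ℂ) :
    schatten2 (M + N) ≤ schatten2 M + schatten2 N := by
  unfold schatten2
  have hconv : ∀ K : Matrix (Fin n) (Fin n) ℂ,
      ∑ i : Fin n, ∑ j : Fin n, ‖K i j‖ ^ 2 = ∑ p : Fin n × Fin n, ‖K p.1 p.2‖ ^ 2 := by
    intro K; rw [← Finset.sum_product']; rfl
  simp only [hconv]
  rw [Real.sqrt_mul (by positivity), Real.sqrt_mul (by positivity),
    Real.sqrt_mul (by positivity), ← mul_add]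
  refine mul_le_mul_of_nonneg_left ?_ (Real.sqrt_nonneg _)
  have := sqrt_sum_sq_add_le (fun p : Fin n × Fin n => M p.1 p.2)
    (fun p : Fin n × Fin n => N p.1 p.2)
  simpa [Matrix.add_apply] using this

lemma norm_scaled_sq (n : ℕ) (z : ℂ) :
    ‖(Real.sqrt n : ℂ)⁻¹ * z‖ ^ 2 = (n : ℝ)⁻¹ * ‖z‖ ^ 2 := by
  rw [norm_mul, norm_inv, Complex.norm_real, Real.norm_eq_abs,
    abs_of_nonneg (Real.sqrt_nonneg _), mul_pow, inv_pow,
    Real.sq_sqrt (by positivity : (0:ℝ) ≤ (n:ℝ))]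

lemma st15_key {Ω : Type*} [MeasurableSpace Ω] (P : Measure Ω) [IsProbabilityMeasure P]
    (X : ℕ → ℕ → Ω → ℂ) (c : ℝ) (m : ℂ)
    (hherm : ∀ i j ω, X j i ω = starRingEnd ℂ (X i j ω))
    (hmval : ∀ i j : ℕ, i < j → (∫ ω', truncBelow c (X i j ω') ∂P) = m)
    (ω : Ω) (n : ℕ) :
    schatten2 (wignerMat (fun _ : Fin 1 => X) 0 n ω - truncMat P X c n ω) ≤
      Real.sqrt ((n : ℝ)⁻¹ * ((n : ℝ)⁻¹ * ∑ i ∈ range n, ‖X i i ω‖ ^ 2)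
          + 2 * (n : ℝ)⁻¹ * (n : ℝ)⁻¹ *
            ∑ j ∈ range n, ∑ i ∈ range j, ‖truncAbove c (X i j ω) + m‖ ^ 2)
        + |1 - (Real.sqrt (sigma2 P (X 0 1) c))⁻¹| *
          Real.sqrt (2 * (n : ℝ)⁻¹ * (n : ℝ)⁻¹ *
            ∑ j ∈ range n, ∑ i ∈ range j, ‖truncBelow c (X i j ω) - m‖ ^ 2) := by
  classical
  set σ : ℝ := Real.sqrt (sigma2 P (X 0 1) c) with hσdef
  set A := wignerMat (fun _ : Fin 1 => X) 0 n ω with hA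
  set T := truncMat P X c n ω with hT
  set B : Matrix (Fin n) (Fin n) ℂ := Matrix.of fun i j =>
    if i = j then 0
    else (Real.sqrt n : ℂ)⁻¹ *
      (truncBelow c (X i.val j.val ω) - ∫ ω', truncBelow c (X i.val j.val ω') ∂P) with hB
  have hsplit : A - T = (A - B) + (B - T) := by abel
  have tri : schatten2 (A - T) ≤ schatten2 (A - B) + schatten2 (B - T) := by
    rw [hsplit]; exact schatten2_add_le _ _
  have hmconj : ∀ i j : ℕ, i < j →
      (∫ ω', truncBelow c (X j i ω') ∂P) = starRingEnd ℂ m := by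
    intro i j hij
    have h1 : (fun ω' => truncBelow c (X j i ω')) =
        fun ω' => starRingEnd ℂ (truncBelow c (X i j ω')) := by
      funext ω'; rw [hherm i j ω', truncBelow_conj]
    rw [h1, integral_conj, hmval i j hij]
  -- e1
  set F : ℕ → ℕ → ℝ := fun a b =>
    if a = b then ‖X a b ω‖ ^ 2
    else ‖truncAbove c (X a b ω) + ∫ ω', truncBelow c (X a b ω') ∂P‖ ^ 2 with hF
  have e1 : schatten2 (A - B) =
      Real.sqrt ((n : ℝ)⁻¹ * ((n : ℝ)⁻¹ * ∑ i ∈ range n, ‖X i i ω‖ ^ 2)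
        + 2 * (n : ℝ)⁻¹ * (n : ℝ)⁻¹ *
          ∑ j ∈ range n, ∑ i ∈ range j, ‖truncAbove c (X i j ω) + m‖ ^ 2) := by
    unfold schatten2
    congr 1
    have hentry : ∀ i j : Fin n, ‖(A - B) i j‖ ^ 2 = (n : ℝ)⁻¹ * F i.val j.val := by
      intro i j
      rw [Matrix.sub_apply]
      by_cases hij : i = j
      · subst hij
        simp only [hA, hB, hF, wignerMat, Matrix.of_apply, if_pos rfl, eq_self_iff_true,
          if_true, sub_zero]
        rw [norm_scaled_sq]
      · have hvij : (i : ℕ) ≠ (j : ℕ) := fun h => hij (Fin.ext h)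
        simp only [hA, hB, hF, wignerMat, Matrix.of_apply, if_neg hij, if_neg hvij]
        rw [← mul_sub, norm_scaled_sq]
        have harg : X i.val j.val ω -
            (truncBelow c (X i.val j.val ω) - ∫ ω', truncBelow c (X i.val j.val ω') ∂P)
            = truncAbove c (X i.val j.val ω) + ∫ ω', truncBelow c (X i.val j.val ω') ∂P := by
          linear_combination (-1 : ℂ) * trunc_add c (X i.val j.val ω)
        rw [harg]
    have hsum1 : ∑ i : Fin n, ∑ j : Fin n, ‖(A - B) i j‖ ^ 2
        = (n : ℝ)⁻¹ * ∑ i : Fin n, ∑ j : Fin n, F i.val j.val := by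
      rw [Finset.mul_sum]
      refine Finset.sum_congr rfl fun i _ => ?_
      rw [Finset.mul_sum]
      exact Finset.sum_congr rfl fun j _ => hentry i j
    rw [hsum1, fin_sum_split n F]
    have hdiag : ∑ a ∈ range n, F a a = ∑ a ∈ range n, ‖X a a ω‖ ^ 2 :=
      Finset.sum_congr rfl fun a _ => if_pos rfl
    have hpair : ∑ j ∈ range n, ∑ i ∈ range j, (F i j + F j i)
        = 2 * ∑ j ∈ range n, ∑ i ∈ range j, ‖truncAbove c (X i j ω) + m‖ ^ 2 := by
      rw [Finset.mul_sum]
      refine Finset.sum_congr rfl fun j _ => ?_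
      rw [Finset.mul_sum]
      refine Finset.sum_congr rfl fun i hi => ?_
      have hij : i < j := mem_range.mp hi
      have hFij : F i j = ‖truncAbove c (X i j ω) + m‖ ^ 2 := by
        rw [hF]; simp only [if_neg (Nat.ne_of_lt hij)]
        rw [hmval i j hij]
      have hFji : F j i = ‖truncAbove c (X i j ω) + m‖ ^ 2 := by
        rw [hF]; simp only [if_neg (Nat.ne_of_gt hij)]
        rw [hmconj i j hij, hherm i j ω, truncAbove_conj, ← map_add (starRingEnd ℂ),
          RCLike.norm_conj]
      rw [hFij, hFji]; ring
    rw [hdiag, hpair]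
    ring
  -- e2
  set G : ℕ → ℕ → ℝ := fun a b =>
    if a = b then 0
    else (1 - σ⁻¹) ^ 2 *
      ‖truncBelow c (X a b ω) - ∫ ω', truncBelow c (X a b ω') ∂P‖ ^ 2 with hG
  have e2 : schatten2 (B - T) =
      |1 - σ⁻¹| * Real.sqrt (2 * (n : ℝ)⁻¹ * (n : ℝ)⁻¹ *
        ∑ j ∈ range n, ∑ i ∈ range j, ‖truncBelow c (X i j ω) - m‖ ^ 2) := by
    unfold schatten2
    rw [← Real.sqrt_sq_eq_abs, ← Real.sqrt_mul (sq_nonneg _)]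
    congr 1
    have hentry : ∀ i j : Fin n, ‖(B - T) i j‖ ^ 2 = (n : ℝ)⁻¹ * G i.val j.val := by
      intro i j
      rw [Matrix.sub_apply]
      by_cases hij : i = j
      · subst hij
        simp [hB, hT, hG, truncMat]
      · have hvij : (i : ℕ) ≠ (j : ℕ) := fun h => hij (Fin.ext h)
        simp only [hB, hT, hG, truncMat, Matrix.of_apply, if_neg hij, if_neg hvij]
        have hrw : (Real.sqrt n : ℂ)⁻¹ *
              (truncBelow c (X i.val j.val ω) - ∫ ω', truncBelow c (X i.val j.val ω') ∂P)
            - (Real.sqrt n : ℂ)⁻¹ * (σ : ℂ)⁻¹ *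
              (truncBelow c (X i.val j.val ω) - ∫ ω', truncBelow c (X i.val j.val ω') ∂P)
            = (Real.sqrt n : ℂ)⁻¹ * ((1 - (σ : ℂ)⁻¹) *
              (truncBelow c (X i.val j.val ω) - ∫ ω', truncBelow c (X i.val j.val ω') ∂P)) := by
          ring
        rw [hrw, norm_scaled_sq, norm_mul, mul_pow]
        have : ‖(1 : ℂ) - (σ : ℂ)⁻¹‖ ^ 2 = (1 - σ⁻¹) ^ 2 := by
          rw [← Complex.ofReal_one, ← Complex.ofReal_inv, ← Complex.ofReal_sub,
            Complex.norm_real, Real.norm_eq_abs, sq_abs]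
        rw [this]
    have hsum1 : ∑ i : Fin n, ∑ j : Fin n, ‖(B - T) i j‖ ^ 2
        = (n : ℝ)⁻¹ * ∑ i : Fin n, ∑ j : Fin n, G i.val j.val := by
      rw [Finset.mul_sum]
      refine Finset.sum_congr rfl fun i _ => ?_
      rw [Finset.mul_sum]
      exact Finset.sum_congr rfl fun j _ => hentry i j
    rw [hsum1, fin_sum_split n G]
    have hdiag : ∑ a ∈ range n, G a a = 0 := by
      refine Finset.sum_eq_zero fun a _ => if_pos rfl
    have hpair : ∑ j ∈ range n, ∑ i ∈ range j, (G i j + G j i)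
        = (1 - σ⁻¹) ^ 2 *
          (2 * ∑ j ∈ range n, ∑ i ∈ range j, ‖truncBelow c (X i j ω) - m‖ ^ 2) := by
      rw [Finset.mul_sum, Finset.mul_sum]
      refine Finset.sum_congr rfl fun j _ => ?_
      rw [Finset.mul_sum, Finset.mul_sum]
      refine Finset.sum_congr rfl fun i hi => ?_
      have hij : i < j := mem_range.mp hi
      have hGij : G i j = (1 - σ⁻¹) ^ 2 * ‖truncBelow c (X i j ω) - m‖ ^ 2 := by
        rw [hG]; simp only [if_neg (Nat.ne_of_lt hij)]
        rw [hmval i j hij]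
      have hGji : G j i = (1 - σ⁻¹) ^ 2 * ‖truncBelow c (X i j ω) - m‖ ^ 2 := by
        rw [hG]; simp only [if_neg (Nat.ne_of_gt hij)]
        rw [hmconj i j hij, hherm i j ω, truncBelow_conj, ← map_sub (starRingEnd ℂ),
          RCLike.norm_conj]
      rw [hGij, hGji]; ring
    rw [hdiag, hpair]
    ring
  calc schatten2 (A - T) ≤ schatten2 (A - B) + schatten2 (B - T) := tri
    _ = _ := by rw [e1, e2]


def tfun (n : ℕ) : ℕ := ∑ i ∈ range (n + 1), i
def fk (k : ℕ) : ℕ := Nat.findGreatest (fun j => tfun j ≤ k) k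
def eIdx (k : ℕ) : ℕ × ℕ := (k - tfun (fk k), fk k + 1)

lemma tfun_succ (n : ℕ) : tfun (n + 1) = tfun n + (n + 1) := Finset.sum_range_succ _ _

lemma le_tfun (n : ℕ) : n ≤ tfun n :=
  Finset.single_le_sum (f := fun i => i) (fun _ _ => Nat.zero_le _) (self_mem_range_succ n)

lemma tfun_mono : Monotone tfun :=
  monotone_nat_of_le_succ fun n => by rw [tfun_succ]; omega

lemma tfun_le_fk (k : ℕ) : tfun (fk k) ≤ k :=
  Nat.findGreatest_spec (P := fun j => tfun j ≤ k) (Nat.zero_le k) (by simp [tfun])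

lemma lt_tfun_fk_succ (k : ℕ) : k < tfun (fk k + 1) := by
  by_contra h
  push_neg at h
  have h1 : fk k + 1 ≤ k := le_trans (le_tfun _) h
  exact Nat.findGreatest_is_greatest (Nat.lt_succ_self _) h1 h

lemma fk_eq {n k : ℕ} (h1 : tfun n ≤ k) (h2 : k < tfun (n + 1)) : fk k = n := by
  have ha : n ≤ fk k := Nat.le_findGreatest (le_trans (le_tfun n) h1) h1
  have hb : fk k ≤ n := by
    by_contra h
    push_neg at h
    have := le_trans (tfun_mono (show n + 1 ≤ fk k from h)) (tfun_le_fk k)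
    omega
  omega

lemma eIdx_lt (k : ℕ) : (eIdx k).1 < (eIdx k).2 := by
  have h1 := lt_tfun_fk_succ k
  have h2 := tfun_le_fk k
  rw [tfun_succ] at h1
  simp only [eIdx]
  omega

lemma eIdx_inj : Function.Injective eIdx := by
  intro a b h
  have h2 : fk a = fk b := by
    have := congrArg Prod.snd h
    simpa [eIdx] using this
  have h1 := congrArg Prod.fst h
  simp only [eIdx, h2] at h1
  have ha := tfun_le_fk a
  have hb := tfun_le_fk b
  rw [h2] at ha
  omega

lemma eIdx_block {n i : ℕ} (hi : i ≤ n) : eIdx (tfun n + i) = (i, n + 1) := by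
  have hf : fk (tfun n + i) = n :=
    fk_eq (Nat.le_add_right _ _) (by rw [tfun_succ]; omega)
  simp [eIdx, hf]

lemma eIdx_zero : eIdx 0 = (0, 1) := by
  have := eIdx_block (n := 0) (i := 0) le_rfl
  simpa [tfun] using this

lemma prefix_eq (h : ℕ → ℕ → ℝ) (n : ℕ) :
    ∑ k ∈ range (tfun n), h (eIdx k).1 (eIdx k).2
      = ∑ j ∈ range (n + 1), ∑ i ∈ range j, h i j := by
  induction n with
  | zero => simp [tfun]
  | succ n ih =>
    rw [tfun_succ, Finset.sum_range_add (fun k => h (eIdx k).1 (eIdx k).2) (tfun n) (n + 1),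
      ih, Finset.sum_range_succ (fun j => ∑ i ∈ range j, h i j) (n + 1)]
    congr 1
    refine Finset.sum_congr rfl fun i hi => ?_
    rw [eIdx_block (Nat.lt_succ_iff.mp (mem_range.mp hi))]

open Topology in
lemma conv_tri (u : ℕ → ℝ) (μ : ℝ)
    (h : Tendsto (fun N : ℕ => (N : ℝ)⁻¹ * ∑ k ∈ range N, u k) atTop (𝓝 μ)) :
    Tendsto (fun n : ℕ => 2 * (n : ℝ)⁻¹ * (n : ℝ)⁻¹ * ∑ k ∈ range (tfun (n - 1)), u k)
      atTop (𝓝 μ) := by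
  have htf : Tendsto (fun n : ℕ => tfun (n - 1)) atTop atTop :=
    tendsto_atTop_mono (fun n => le_tfun (n - 1)) ((tendsto_sub_atTop_nat 1).comp tendsto_id)
  have h2 := h.comp htf
  have hgauss : ∀ n : ℕ, 1 ≤ n → 2 * (tfun (n - 1) : ℝ) = n * (n - 1 : ℝ) := by
    intro n hn
    have he : n - 1 + 1 = n := by omega
    have h1 : tfun (n - 1) = ∑ i ∈ range n, i := by unfold tfun; rw [he]
    rw [h1]
    have h2 : ((∑ i ∈ range n, i) * 2 : ℕ) = (n * (n - 1) : ℕ) :=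
      Finset.sum_range_id_mul_two n
    have hc : ((∑ i ∈ range n, i : ℕ) : ℝ) * 2 = ((n * (n - 1) : ℕ) : ℝ) := by
      exact_mod_cast congrArg (Nat.cast : ℕ → ℝ) h2
    rw [Nat.cast_mul, Nat.cast_sub hn, Nat.cast_one] at hc
    linarith
  have h3 : Tendsto (fun n : ℕ => 2 * (n : ℝ)⁻¹ * (n : ℝ)⁻¹ * (tfun (n - 1) : ℝ))
      atTop (𝓝 1) := by
    have hcong : ∀ᶠ n : ℕ in atTop,
        1 - (n : ℝ)⁻¹ = 2 * (n : ℝ)⁻¹ * (n : ℝ)⁻¹ * (tfun (n - 1) : ℝ) := by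
      filter_upwards [eventually_ge_atTop 1] with n hn
      have hg := hgauss n hn
      have hn0 : (n : ℝ) ≠ 0 := by positivity
      field_simp
      nlinarith [hg]
    have hlim : Tendsto (fun n : ℕ => 1 - (n : ℝ)⁻¹) atTop (𝓝 1) := by
      simpa using tendsto_const_nhds.sub
        (tendsto_inv_atTop_nhds_zero_nat : Tendsto (fun n : ℕ => (n : ℝ)⁻¹) atTop (𝓝 0))
    exact Tendsto.congr' hcong hlim
  have heq : ∀ n : ℕ,
      2 * (n : ℝ)⁻¹ * (n : ℝ)⁻¹ * ∑ k ∈ range (tfun (n - 1)), u k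
        = (2 * (n : ℝ)⁻¹ * (n : ℝ)⁻¹ * (tfun (n - 1) : ℝ))
          * ((tfun (n - 1) : ℝ)⁻¹ * ∑ k ∈ range (tfun (n - 1)), u k) := by
    intro n
    rcases eq_or_ne (tfun (n - 1)) 0 with h0 | h0
    · simp [h0]
    · have hT : (tfun (n - 1) : ℝ) ≠ 0 := Nat.cast_ne_zero.mpr h0
      rw [mul_assoc (2 * (n : ℝ)⁻¹ * (n : ℝ)⁻¹) ((tfun (n - 1) : ℕ) : ℝ) _,
        ← mul_assoc ((tfun (n - 1) : ℕ) : ℝ) _ _, mul_inv_cancel₀ hT, one_mul]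
  have hfin := h3.mul h2
  rw [one_mul] at hfin
  exact Tendsto.congr (fun n => (heq n).symm) hfin

open Topology in
lemma slln_pairs {Ω : Type*} [MeasurableSpace Ω] (P : Measure Ω) [IsProbabilityMeasure P]
    (X : ℕ → ℕ → Ω → ℂ) (hX : IsWignerEntries P (fun _ : Fin 1 => X))
    (g : ℂ → ℝ) (hg : Measurable g) (hgint : Integrable (fun ω => g (X 0 1 ω)) P) :
    ∀ᵐ ω ∂P, Tendsto (fun n : ℕ => 2 * (n : ℝ)⁻¹ * (n : ℝ)⁻¹ *
        ∑ j ∈ range n, ∑ i ∈ range j, g (X i j ω)) atTop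
      (𝓝 (∫ ω, g (X 0 1 ω) ∂P)) := by
  set Z : ℕ → Ω → ℝ := fun k ω => g (X (eIdx k).1 (eIdx k).2 ω) with hZdef
  have hZ0 : Z 0 = fun ω => g (X 0 1 ω) := by
    rw [hZdef]; simp only [eIdx_zero]
  have base : ∀ i j : ℕ, i < j → ProbabilityTheory.IdentDistrib (X i j) (X 0 1) P P :=
    fun i j hij => ⟨(hX.meas 0 i j).aemeasurable, (hX.meas 0 0 1).aemeasurable,
      hX.offdiag_distrib 0 i j hij⟩
  have hident : ∀ k, ProbabilityTheory.IdentDistrib (Z k) (Z 0) P P := by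
    intro k
    rw [hZ0]
    exact (base _ _ (eIdx_lt k)).comp hg
  have hindep : Pairwise (Function.onFun (ProbabilityTheory.IndepFun · · P) Z) := by
    intro k k' hkk'
    have hne : eIdx k ≠ eIdx k' := fun h => hkk' (eIdx_inj h)
    have h1 : ProbabilityTheory.IndepFun (X (eIdx k).1 (eIdx k).2)
        (X (eIdx k').1 (eIdx k').2) P := by
      exact hX.indep.indepFun
        (i := ((0 : Fin 1), ⟨eIdx k, (eIdx_lt k).le⟩))
        (j := ((0 : Fin 1), ⟨eIdx k', (eIdx_lt k').le⟩))
        (by simpa [Prod.ext_iff, Subtype.ext_iff] using hne)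
    exact h1.comp hg hg
  have hintg : Integrable (Z 0) P := by rw [hZ0]; exact hgint
  have hsl := ProbabilityTheory.strong_law_ae Z hintg hindep hident
  have hmean : (∫ ω, Z 0 ω ∂P) = ∫ ω, g (X 0 1 ω) ∂P := by rw [hZ0]
  filter_upwards [hsl] with ω hω
  have hω' : Tendsto (fun N : ℕ => (N : ℝ)⁻¹ * ∑ k ∈ range N, Z k ω) atTop
      (𝓝 (∫ ω, g (X 0 1 ω) ∂P)) := by
    rw [← hmean]
    simpa [smul_eq_mul] using hω
  have hconv := conv_tri (fun k => Z k ω) _ hω'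
  have hrw : ∀ n : ℕ, ∑ k ∈ range (tfun (n - 1)), Z k ω
      = ∑ j ∈ range n, ∑ i ∈ range j, g (X i j ω) := by
    intro n
    have := prefix_eq (fun i j => g (X i j ω)) (n - 1)
    rw [hZdef]
    cases n with
    | zero => simp [tfun]
    | succ n => simpa [Nat.succ_sub_one] using this
  exact Tendsto.congr (fun n => by rw [hrw n]) hconv

open Topology in
lemma slln_diag {Ω : Type*} [MeasurableSpace Ω] (P : Measure Ω) [IsProbabilityMeasure P]
    (X : ℕ → ℕ → Ω → ℂ) (hX : IsWignerEntries P (fun _ : Fin 1 => X))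
    (h2 : Integrable (fun ω => ‖X 0 0 ω‖ ^ 2) P) :
    ∀ᵐ ω ∂P, Tendsto (fun n : ℕ => (n : ℝ)⁻¹ * ((n : ℝ)⁻¹ *
        ∑ i ∈ range n, ‖X i i ω‖ ^ 2)) atTop (𝓝 0) := by
  set Z : ℕ → Ω → ℝ := fun i ω => ‖X i i ω‖ ^ 2 with hZdef
  have hgm : Measurable fun z : ℂ => ‖z‖ ^ 2 := (measurable_norm).pow_const 2
  have hident : ∀ k, ProbabilityTheory.IdentDistrib (Z k) (Z 0) P P := by
    intro k
    have : ProbabilityTheory.IdentDistrib (X k k) (X 0 0) P P :=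
      ⟨(hX.meas 0 k k).aemeasurable, (hX.meas 0 0 0).aemeasurable, hX.diag_distrib 0 k⟩
    exact this.comp hgm
  have hindep : Pairwise (Function.onFun (ProbabilityTheory.IndepFun · · P) Z) := by
    intro k k' hkk'
    have h1 : ProbabilityTheory.IndepFun (X k k) (X k' k') P := by
      exact hX.indep.indepFun
        (i := ((0 : Fin 1), ⟨(k, k), le_rfl⟩))
        (j := ((0 : Fin 1), ⟨(k', k'), le_rfl⟩))
        (by simpa [Prod.ext_iff, Subtype.ext_iff] using hkk')
    exact h1.comp hgm hgm
  have hsl := ProbabilityTheory.strong_law_ae Z h2 hindep hident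
  filter_upwards [hsl] with ω hω
  have hω' : Tendsto (fun n : ℕ => (n : ℝ)⁻¹ * ∑ i ∈ range n, Z i ω) atTop
      (𝓝 (∫ ω, Z 0 ω ∂P)) := by simpa [smul_eq_mul] using hω
  have := tendsto_inv_atTop_nhds_zero_nat.mul hω'
  rw [zero_mul] at this
  exact this

lemma normsq_complex (w : ℂ) : ‖w‖ ^ 2 = w.re ^ 2 + w.im ^ 2 := by
  rw [Complex.sq_norm, Complex.normSq_apply]; ring

lemma cVar_expand {Ω : Type*} [MeasurableSpace Ω] (P : Measure Ω) [IsProbabilityMeasure P]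
    (Z : Ω → ℂ) (hZ : Integrable Z P) (hZ2 : Integrable (fun ω => ‖Z ω‖ ^ 2) P) :
    ∫ ω, ‖Z ω - ∫ ω', Z ω' ∂P‖ ^ 2 ∂P = (∫ ω, ‖Z ω‖ ^ 2 ∂P) - ‖∫ ω', Z ω' ∂P‖ ^ 2 := by
  set a := ∫ ω', Z ω' ∂P with ha
  have hpt : ∀ ω, ‖Z ω - a‖ ^ 2
      = ‖Z ω‖ ^ 2 - 2 * (Z ω * (starRingEnd ℂ) a).re + ‖a‖ ^ 2 := by
    intro ω
    simp only [normsq_complex, Complex.sub_re, Complex.sub_im, Complex.mul_re,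
      Complex.conj_re, Complex.conj_im]
    ring
  have hint1 : Integrable (fun ω => (Z ω * (starRingEnd ℂ) a).re) P :=
    (hZ.mul_const ((starRingEnd ℂ) a)).re
  calc ∫ ω, ‖Z ω - a‖ ^ 2 ∂P
      = ∫ ω, (‖Z ω‖ ^ 2 - 2 * (Z ω * (starRingEnd ℂ) a).re + ‖a‖ ^ 2) ∂P :=
        integral_congr_ae (Filter.Eventually.of_forall hpt)
    _ = (∫ ω, ‖Z ω‖ ^ 2 ∂P) - 2 * (∫ ω, (Z ω * (starRingEnd ℂ) a).re ∂P) + ‖a‖ ^ 2 := by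
        have hI1 : Integrable (fun ω => ‖Z ω‖ ^ 2 - 2 * (Z ω * (starRingEnd ℂ) a).re) P :=
          hZ2.sub (hint1.const_mul 2)
        rw [integral_add hI1 (integrable_const _),
          integral_sub hZ2 (hint1.const_mul 2), integral_const_mul, integral_const]
        simp
    _ = (∫ ω, ‖Z ω‖ ^ 2 ∂P) - ‖a‖ ^ 2 := by
        have hre : ∫ ω, (Z ω * (starRingEnd ℂ) a).re ∂P
            = ((∫ ω, Z ω * (starRingEnd ℂ) a ∂P)).re :=
          integral_re (hZ.mul_const _)
        rw [hre, integral_mul_const, ← ha]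
        have hcc : (a * (starRingEnd ℂ) a).re = ‖a‖ ^ 2 := by
          rw [Complex.mul_conj]
          simp [Complex.normSq_eq_norm_sq, sq]
        rw [hcc]; ring

open Topology in

/-- Almost surely,
`limsup_n ‖A_n − Ã_n‖₂ ≤ √(Var(X₁₂·𝟙_{|X₁₂|>c})) + |1 − σ(c)| ≤ √(1 − σ²(c)) + |1 − σ(c)|`. -/
theorem statement15 {Ω : Type*} [MeasurableSpace Ω] (P : Measure Ω) [IsProbabilityMeasure P]
    (X : ℕ → ℕ → Ω → ℂ) (hX : IsWignerEntries P (fun _ : Fin 1 => X))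
    (h4 : Integrable (fun ω => ‖X 0 1 ω‖ ^ 4) P)
    (h2 : Integrable (fun ω => ‖X 0 0 ω‖ ^ 2) P)
    (c : ℝ) (hc : 0 < c) (hσ : 0 < sigma2 P (X 0 1) c) :
    (∀ᵐ ω ∂P,
      Filter.limsup
          (fun n => schatten2 (wignerMat (fun _ : Fin 1 => X) 0 n ω - truncMat P X c n ω))
          Filter.atTop ≤
        Real.sqrt (cVar P fun ω => truncAbove c (X 0 1 ω)) +
          |1 - Real.sqrt (sigma2 P (X 0 1) c)|) ∧
    Real.sqrt (cVar P fun ω => truncAbove c (X 0 1 ω)) +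
        |1 - Real.sqrt (sigma2 P (X 0 1) c)| ≤
      Real.sqrt (1 - sigma2 P (X 0 1) c) + |1 - Real.sqrt (sigma2 P (X 0 1) c)| := by
  have hYmeas : Measurable (X 0 1) := hX.meas 0 0 1
  set m := ∫ ω', truncBelow c (X 0 1 ω') ∂P with hm
  have hsm_tb : AEStronglyMeasurable (fun ω => truncBelow c (X 0 1 ω)) P :=
    ((measurable_truncBelow c).comp hYmeas).aestronglyMeasurable
  have htb_int : Integrable (fun ω => truncBelow c (X 0 1 ω)) P := by
    refine Integrable.mono' (integrable_const c) hsm_tb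
      (Filter.Eventually.of_forall fun ω => ?_)
    exact norm_truncBelow_le c hc.le _
  have hY2 : Integrable (fun ω => ‖X 0 1 ω‖ ^ 2) P := by
    refine Integrable.mono' ((integrable_const 1).add h4)
      (hYmeas.norm.pow_const 2).aestronglyMeasurable
      (Filter.Eventually.of_forall fun ω => ?_)
    simp only [Pi.add_apply]
    rw [Real.norm_eq_abs, abs_of_nonneg (by positivity)]
    nlinarith [sq_nonneg (‖X 0 1 ω‖ ^ 2 - 1), norm_nonneg (X 0 1 ω)]
  have hYint : Integrable (X 0 1) P := by
    refine Integrable.mono' ((integrable_const 1).add h4)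
      hYmeas.aestronglyMeasurable (Filter.Eventually.of_forall fun ω => ?_)
    simp only [Pi.add_apply]
    have ht := norm_nonneg (X 0 1 ω)
    nlinarith [sq_nonneg (‖X 0 1 ω‖ ^ 2 - 1), sq_nonneg (‖X 0 1 ω‖ - 1),
      sq_nonneg (‖X 0 1 ω‖ ^ 2 - ‖X 0 1 ω‖)]
  have hta_eq : (fun ω => truncAbove c (X 0 1 ω))
      = fun ω => X 0 1 ω - truncBelow c (X 0 1 ω) :=
    funext fun ω => by linear_combination trunc_add c (X 0 1 ω)
  have hta_int : Integrable (fun ω => truncAbove c (X 0 1 ω)) P := by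
    rw [hta_eq]; exact hYint.sub htb_int
  have hEta : (∫ ω, truncAbove c (X 0 1 ω) ∂P) = -m := by
    have h0 : ∫ ω, X 0 1 ω ∂P = 0 := hX.mean_zero 0
    rw [hta_eq, integral_sub hYint htb_int, h0, zero_sub, hm]
  have hta2 : Integrable (fun ω => ‖truncAbove c (X 0 1 ω)‖ ^ 2) P := by
    refine Integrable.mono' hY2
      (((measurable_truncAbove c).comp hYmeas).norm.pow_const 2).aestronglyMeasurable
      (Filter.Eventually.of_forall fun ω => ?_)
    rw [Real.norm_eq_abs, abs_of_nonneg (by positivity)]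
    exact pow_le_pow_left₀ (norm_nonneg _) (norm_truncAbove_le c _) 2
  have htb2 : Integrable (fun ω => ‖truncBelow c (X 0 1 ω)‖ ^ 2) P := by
    refine Integrable.mono' (integrable_const (c ^ 2))
      (((measurable_truncBelow c).comp hYmeas).norm.pow_const 2).aestronglyMeasurable
      (Filter.Eventually.of_forall fun ω => ?_)
    rw [Real.norm_eq_abs, abs_of_nonneg (by positivity)]
    exact pow_le_pow_left₀ (norm_nonneg _) (norm_truncBelow_le c hc.le _) 2
  have hvar1 : (∫ ω, ‖X 0 1 ω‖ ^ 2 ∂P) = 1 := hX.var_one 0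
  have hcVar_ta : cVar P (fun ω => truncAbove c (X 0 1 ω))
      = (∫ ω, ‖truncAbove c (X 0 1 ω)‖ ^ 2 ∂P) - ‖m‖ ^ 2 := by
    unfold cVar
    rw [cVar_expand P _ hta_int hta2, hEta, norm_neg]
  have hsigma2_eq : sigma2 P (X 0 1) c
      = (∫ ω, ‖truncBelow c (X 0 1 ω)‖ ^ 2 ∂P) - ‖m‖ ^ 2 := by
    unfold sigma2 cVar
    rw [cVar_expand P _ htb_int htb2, ← hm]
  have hsum_t : (∫ ω, ‖truncBelow c (X 0 1 ω)‖ ^ 2 ∂P)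
      + (∫ ω, ‖truncAbove c (X 0 1 ω)‖ ^ 2 ∂P) = 1 := by
    rw [← integral_add htb2 hta2]
    rw [integral_congr_ae (Filter.Eventually.of_forall
      fun ω => normsq_trunc_split c (X 0 1 ω))]
    exact hvar1
  have hpart2 : cVar P (fun ω => truncAbove c (X 0 1 ω)) ≤ 1 - sigma2 P (X 0 1) c := by
    rw [hcVar_ta, hsigma2_eq]
    nlinarith [sq_nonneg ‖m‖]
  refine ⟨?_, add_le_add_left (Real.sqrt_le_sqrt hpart2) _⟩
  -- part 1
  set σ : ℝ := Real.sqrt (sigma2 P (X 0 1) c) with hσdef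
  have hσpos : 0 < σ := Real.sqrt_pos.mpr hσ
  set g1 : ℂ → ℝ := fun z => ‖truncAbove c z + m‖ ^ 2 with hg1def
  set g2 : ℂ → ℝ := fun z => ‖truncBelow c z - m‖ ^ 2 with hg2def
  have hg1m : Measurable g1 := (((measurable_truncAbove c).add_const m).norm).pow_const 2
  have hg2m : Measurable g2 := (((measurable_truncBelow c).sub_const m).norm).pow_const 2
  have hg1int : Integrable (fun ω => g1 (X 0 1 ω)) P := by
    refine Integrable.mono' ((integrable_const (2 * ‖m‖ ^ 2)).add (hY2.const_mul 2))
      (hg1m.comp hYmeas).aestronglyMeasurable (Filter.Eventually.of_forall fun ω => ?_)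
    have h1 : ‖truncAbove c (X 0 1 ω) + m‖ ≤ ‖X 0 1 ω‖ + ‖m‖ :=
      le_trans (norm_add_le _ _) (add_le_add_left (norm_truncAbove_le c _) _)
    simp only [Pi.add_apply, hg1def]
    rw [Real.norm_eq_abs, abs_of_nonneg (by positivity)]
    nlinarith [norm_nonneg (truncAbove c (X 0 1 ω) + m), norm_nonneg (X 0 1 ω),
      norm_nonneg m, sq_nonneg (‖X 0 1 ω‖ - ‖m‖)]
  have hg2int : Integrable (fun ω => g2 (X 0 1 ω)) P := by
    refine Integrable.mono' (integrable_const ((c + ‖m‖) ^ 2))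
      (hg2m.comp hYmeas).aestronglyMeasurable (Filter.Eventually.of_forall fun ω => ?_)
    have h1 : ‖truncBelow c (X 0 1 ω) - m‖ ≤ c + ‖m‖ :=
      le_trans (norm_sub_le _ _) (add_le_add_left (norm_truncBelow_le c hc.le _) _)
    simp only [hg2def]
    rw [Real.norm_eq_abs, abs_of_nonneg (by positivity)]
    exact pow_le_pow_left₀ (norm_nonneg _) h1 2
  have hmval : ∀ i j : ℕ, i < j → (∫ ω', truncBelow c (X i j ω') ∂P) = m := by
    intro i j hij
    have hmap : P.map (X i j) = P.map (X 0 1) := hX.offdiag_distrib 0 i j hij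
    calc ∫ ω', truncBelow c (X i j ω') ∂P
        = ∫ z, truncBelow c z ∂(P.map (X i j)) :=
          (integral_map (hX.meas 0 i j).aemeasurable
            (measurable_truncBelow c).aestronglyMeasurable).symm
      _ = ∫ z, truncBelow c z ∂(P.map (X 0 1)) := by rw [hmap]
      _ = m := by
          rw [integral_map hYmeas.aemeasurable
            (measurable_truncBelow c).aestronglyMeasurable, hm]
  have hV1 : (∫ ω, g1 (X 0 1 ω) ∂P) = cVar P (fun ω => truncAbove c (X 0 1 ω)) := by
    unfold cVar
    rw [hEta]
    simp only [hg1def, sub_neg_eq_add]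
  have hW1 : (∫ ω, g2 (X 0 1 ω) ∂P) = sigma2 P (X 0 1) c := by
    unfold sigma2 cVar
    rw [← hm]
  have hU := slln_pairs P X hX g1 hg1m hg1int
  have hWs := slln_pairs P X hX g2 hg2m hg2int
  have hD := slln_diag P X hX h2
  filter_upwards [hU, hWs, hD] with ω hUω hWω hDω
  have hherm : ∀ i j ω', X j i ω' = starRingEnd ℂ (X i j ω') := fun i j ω' => hX.herm 0 i j ω'
  have hbound : ∀ n : ℕ,
      schatten2 (wignerMat (fun _ : Fin 1 => X) 0 n ω - truncMat P X c n ω) ≤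
        Real.sqrt ((n : ℝ)⁻¹ * ((n : ℝ)⁻¹ * ∑ i ∈ range n, ‖X i i ω‖ ^ 2)
            + 2 * (n : ℝ)⁻¹ * (n : ℝ)⁻¹ *
              ∑ j ∈ range n, ∑ i ∈ range j, ‖truncAbove c (X i j ω) + m‖ ^ 2)
          + |1 - σ⁻¹| *
            Real.sqrt (2 * (n : ℝ)⁻¹ * (n : ℝ)⁻¹ *
              ∑ j ∈ range n, ∑ i ∈ range j, ‖truncBelow c (X i j ω) - m‖ ^ 2) :=
    fun n => st15_key P X c m hherm hmval ω n
  have hlim : Tendsto (fun n : ℕ =>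
      Real.sqrt ((n : ℝ)⁻¹ * ((n : ℝ)⁻¹ * ∑ i ∈ range n, ‖X i i ω‖ ^ 2)
          + 2 * (n : ℝ)⁻¹ * (n : ℝ)⁻¹ *
            ∑ j ∈ range n, ∑ i ∈ range j, ‖truncAbove c (X i j ω) + m‖ ^ 2)
        + |1 - σ⁻¹| *
          Real.sqrt (2 * (n : ℝ)⁻¹ * (n : ℝ)⁻¹ *
            ∑ j ∈ range n, ∑ i ∈ range j, ‖truncBelow c (X i j ω) - m‖ ^ 2)) atTop
      (𝓝 (Real.sqrt (cVar P (fun ω => truncAbove c (X 0 1 ω))) + |1 - σ|)) := by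
    have hDU : Tendsto (fun n : ℕ =>
        (n : ℝ)⁻¹ * ((n : ℝ)⁻¹ * ∑ i ∈ range n, ‖X i i ω‖ ^ 2)
          + 2 * (n : ℝ)⁻¹ * (n : ℝ)⁻¹ *
            ∑ j ∈ range n, ∑ i ∈ range j, ‖truncAbove c (X i j ω) + m‖ ^ 2) atTop
        (𝓝 (0 + cVar P (fun ω => truncAbove c (X 0 1 ω)))) := by
      refine Tendsto.add hDω ?_
      rw [← hV1]
      exact hUω
    rw [zero_add] at hDU
    have hsq1 : Tendsto (fun n : ℕ =>
        Real.sqrt ((n : ℝ)⁻¹ * ((n : ℝ)⁻¹ * ∑ i ∈ range n, ‖X i i ω‖ ^ 2)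
          + 2 * (n : ℝ)⁻¹ * (n : ℝ)⁻¹ *
            ∑ j ∈ range n, ∑ i ∈ range j, ‖truncAbove c (X i j ω) + m‖ ^ 2)) atTop
        (𝓝 (Real.sqrt (cVar P (fun ω => truncAbove c (X 0 1 ω))))) :=
      (Real.continuous_sqrt.tendsto _).comp hDU
    have hW2 : Tendsto (fun n : ℕ =>
        2 * (n : ℝ)⁻¹ * (n : ℝ)⁻¹ *
          ∑ j ∈ range n, ∑ i ∈ range j, ‖truncBelow c (X i j ω) - m‖ ^ 2) atTop
        (𝓝 (sigma2 P (X 0 1) c)) := by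
      rw [← hW1]; exact hWω
    have hsq2 : Tendsto (fun n : ℕ =>
        |1 - σ⁻¹| * Real.sqrt (2 * (n : ℝ)⁻¹ * (n : ℝ)⁻¹ *
          ∑ j ∈ range n, ∑ i ∈ range j, ‖truncBelow c (X i j ω) - m‖ ^ 2)) atTop
        (𝓝 (|1 - σ⁻¹| * σ)) := by
      refine Tendsto.const_mul _ ?_
      have := (Real.continuous_sqrt.tendsto _).comp hW2
      simpa [hσdef, Function.comp_def] using this
    have hκσ : |1 - σ⁻¹| * σ = |1 - σ| := by
      calc |1 - σ⁻¹| * σ = |1 - σ⁻¹| * |σ| := by rw [abs_of_pos hσpos]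
        _ = |(1 - σ⁻¹) * σ| := (abs_mul _ _).symm
        _ = |σ - 1| := by rw [sub_mul, one_mul, inv_mul_cancel₀ hσpos.ne']
        _ = |1 - σ| := abs_sub_comm _ _
    rw [hκσ] at hsq2
    exact hsq1.add hsq2
  have hcob : Filter.IsCoboundedUnder (· ≤ ·) atTop
      (fun n => schatten2 (wignerMat (fun _ : Fin 1 => X) 0 n ω - truncMat P X c n ω)) := by
    refine Filter.IsBoundedUnder.isCoboundedUnder_le ?_
    exact Filter.isBoundedUnder_of ⟨0, fun n => schatten2_nonneg _⟩
  refine le_trans (Filter.limsup_le_limsup (Filter.Eventually.of_forall hbound) hcob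
    hlim.isBoundedUnder_le) (le_of_eq hlim.limsup_eq)
end
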